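/- Define the constant C_𝓛 = ( (1+αL)^{N−1} α ρ + (ρ/L)(1+αL)^N ((1+αL)^{N−1} − 1) ) (1+αL)^N. Then for every w, u ∈ ℝ^d the meta gradient satisfies ‖G(w) − G(u)‖ ≤ ( C_𝓛 ‖∇l(w)‖ + (1+αL)^{2N} L ) ‖w − u‖. -/

import Mathlib

open MeasureTheory

set_option maxHeartbeats 1000000
set_option synthInstance.maxHeartbeats 400000

noncomputable def innerPath {d : ℕ} (α : ℝ) (l : EuclideanSpace ℝ (Fin d) → ℝ) :
    ℕ → EuclideanSpace ℝ (Fin d) → EuclideanSpace ℝ (Fin d)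
  | 0, w => w
  | j + 1, w => innerPath α l j w - α • gradient l (innerPath α l j w)

noncomputable def hessProd {d : ℕ} (α : ℝ) (N : ℕ)
    (lS : EuclideanSpace ℝ (Fin d) → ℝ) (w : EuclideanSpace ℝ (Fin d)) :
    EuclideanSpace ℝ (Fin d) →L[ℝ] EuclideanSpace ℝ (Fin d) :=
  ((List.range N).map fun j =>
    ContinuousLinearMap.id ℝ (EuclideanSpace ℝ (Fin d)) -
      α • fderiv ℝ (gradient lS) (innerPath α lS j w)).prod

noncomputable def metaGrad {d : ℕ} (α : ℝ) (N : ℕ)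
    (lS lT : EuclideanSpace ℝ (Fin d) → ℝ) (w : EuclideanSpace ℝ (Fin d)) :
    EuclideanSpace ℝ (Fin d) :=
  hessProd α N lS w (gradient lT (innerPath α lS N w))

/-- recursive bound for the product difference -/
noncomputable def cBound (α L ρ : ℝ) : ℕ → ℝ
  | 0 => 0
  | N + 1 => cBound α L ρ N * (1 + α * L) + α * ρ * (1 + α * L) ^ (2 * N)

lemma pathLip {d : ℕ} {α L : ℝ} (hα : 0 < α) (hL : 0 < L)
    {l : EuclideanSpace ℝ (Fin d) → ℝ}
    (hgrad : ∀ w u : EuclideanSpace ℝ (Fin d), ‖gradient l w - gradient l u‖ ≤ L * ‖w - u‖) :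
    ∀ (j : ℕ) (w u : EuclideanSpace ℝ (Fin d)),
    ‖innerPath α l j w - innerPath α l j u‖ ≤ (1 + α * L) ^ j * ‖w - u‖ := by
  intro j
  induction j with
  | zero => intro w u; simp [innerPath]
  | succ j ih =>
    intro w u
    set a := innerPath α l j w
    set b := innerPath α l j u
    have hrw : innerPath α l (j + 1) w - innerPath α l (j + 1) u
        = (a - b) - α • (gradient l a - gradient l b) := by
      show (a - α • gradient l a) - (b - α • gradient l b) = _
      rw [smul_sub]; abel
    have h1 : ‖innerPath α l (j + 1) w - innerPath α l (j + 1) u‖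
        ≤ ‖a - b‖ + α * ‖gradient l a - gradient l b‖ := by
      rw [hrw]
      refine (norm_sub_le _ _).trans ?_
      rw [norm_smul, Real.norm_eq_abs, abs_of_pos hα]
    have h2 := hgrad a b
    have h3 := ih w u
    calc ‖innerPath α l (j + 1) w - innerPath α l (j + 1) u‖
        ≤ ‖a - b‖ + α * (L * ‖a - b‖) := by
          refine h1.trans ?_
          have := mul_le_mul_of_nonneg_left h2 hα.le
          linarith
      _ = (1 + α * L) * ‖a - b‖ := by ring
      _ ≤ (1 + α * L) * ((1 + α * L) ^ j * ‖w - u‖) := by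
          refine mul_le_mul_of_nonneg_left h3 ?_
          positivity
      _ = (1 + α * L) ^ (j + 1) * ‖w - u‖ := by ring

lemma gradGrowth {d : ℕ} {α L : ℝ} (hα : 0 < α) (hL : 0 < L)
    {l : EuclideanSpace ℝ (Fin d) → ℝ}
    (hgrad : ∀ w u : EuclideanSpace ℝ (Fin d), ‖gradient l w - gradient l u‖ ≤ L * ‖w - u‖) :
    ∀ (j : ℕ) (w : EuclideanSpace ℝ (Fin d)),
    ‖gradient l (innerPath α l j w)‖ ≤ (1 + α * L) ^ j * ‖gradient l w‖ := by
  intro j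
  induction j with
  | zero => intro w; simp [innerPath]
  | succ j ih =>
    intro w
    set a := innerPath α l j w
    have hstep : innerPath α l (j + 1) w - a = -(α • gradient l a) := by
      show (a - α • gradient l a) - a = _
      abel
    have h1 : ‖gradient l (innerPath α l (j + 1) w)‖
        ≤ ‖gradient l a‖ + ‖gradient l (innerPath α l (j + 1) w) - gradient l a‖ := by
      have := norm_add_le (gradient l a)
        (gradient l (innerPath α l (j + 1) w) - gradient l a)
      simpa using this
    have h2 : ‖gradient l (innerPath α l (j + 1) w) - gradient l a‖
        ≤ L * (α * ‖gradient l a‖) := by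
      refine (hgrad _ _).trans ?_
      rw [hstep, norm_neg, norm_smul, Real.norm_eq_abs, abs_of_pos hα]
    have h3 := ih w
    calc ‖gradient l (innerPath α l (j + 1) w)‖
        ≤ (1 + α * L) * ‖gradient l a‖ := by nlinarith [norm_nonneg (gradient l a)]
      _ ≤ (1 + α * L) * ((1 + α * L) ^ j * ‖gradient l w‖) := by
          refine mul_le_mul_of_nonneg_left h3 ?_; positivity
      _ = (1 + α * L) ^ (j + 1) * ‖gradient l w‖ := by ring

lemma hessBound {d : ℕ} {L : ℝ} (hL : 0 < L) {l : EuclideanSpace ℝ (Fin d) → ℝ}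
    (hgrad : ∀ w u : EuclideanSpace ℝ (Fin d), ‖gradient l w - gradient l u‖ ≤ L * ‖w - u‖) :
    ∀ x : EuclideanSpace ℝ (Fin d), ‖fderiv ℝ (gradient l) x‖ ≤ L := by
  have hlip : LipschitzWith L.toNNReal (gradient l) := by
    apply LipschitzWith.of_dist_le_mul
    intro a b
    simpa [dist_eq_norm, Real.coe_toNNReal _ hL.le] using hgrad a b
  intro x
  have := norm_fderiv_le_of_lipschitz ℝ hlip (x₀ := x)
  rwa [Real.coe_toNNReal _ hL.le] at this

lemma factorBound {d : ℕ} {α L : ℝ} (hα : 0 < α) (hL : 0 < L)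
    {l : EuclideanSpace ℝ (Fin d) → ℝ}
    (hgrad : ∀ w u : EuclideanSpace ℝ (Fin d), ‖gradient l w - gradient l u‖ ≤ L * ‖w - u‖) :
    ∀ x : EuclideanSpace ℝ (Fin d),
    ‖ContinuousLinearMap.id ℝ (EuclideanSpace ℝ (Fin d)) - α • fderiv ℝ (gradient l) x‖
      ≤ 1 + α * L := by
  intro x
  refine (norm_sub_le _ _).trans ?_
  have h1 : ‖ContinuousLinearMap.id ℝ (EuclideanSpace ℝ (Fin d))‖ ≤ 1 :=
    ContinuousLinearMap.norm_id_le
  have h2 : ‖α • fderiv ℝ (gradient l) x‖ ≤ α * L := by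
    refine (norm_smul_le α (fderiv ℝ (gradient l) x)).trans ?_
    rw [Real.norm_eq_abs, abs_of_pos hα]
    exact mul_le_mul_of_nonneg_left (hessBound hL hgrad x) hα.le
  linarith

lemma hessProd_succ {d : ℕ} (α : ℝ) (l : EuclideanSpace ℝ (Fin d) → ℝ) (N : ℕ)
    (w : EuclideanSpace ℝ (Fin d)) :
    hessProd α (N + 1) l w = hessProd α N l w *
      (ContinuousLinearMap.id ℝ (EuclideanSpace ℝ (Fin d)) -
        α • fderiv ℝ (gradient l) (innerPath α l N w)) := by
  rw [hessProd, hessProd, List.range_succ, List.map_append, List.prod_append]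
  simp

lemma hessProd_norm {d : ℕ} {α L : ℝ} (hα : 0 < α) (hL : 0 < L)
    {l : EuclideanSpace ℝ (Fin d) → ℝ}
    (hgrad : ∀ w u : EuclideanSpace ℝ (Fin d), ‖gradient l w - gradient l u‖ ≤ L * ‖w - u‖) :
    ∀ (N : ℕ) (w : EuclideanSpace ℝ (Fin d)), ‖hessProd α N l w‖ ≤ (1 + α * L) ^ N := by
  intro N
  induction N with
  | zero =>
    intro w
    have h0 : hessProd α 0 l w = 1 := rfl
    rw [h0, pow_zero, ContinuousLinearMap.one_def]
    exact ContinuousLinearMap.norm_id_le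
  | succ N ih =>
    intro w
    rw [hessProd_succ α l N w]
    refine (norm_mul_le _ _).trans ?_
    have h1 := ih w
    have h2 := factorBound hα hL hgrad (innerPath α l N w)
    calc ‖hessProd α N l w‖ * ‖_‖ ≤ (1 + α * L) ^ N * (1 + α * L) := by
          refine mul_le_mul h1 h2 (norm_nonneg _) ?_; positivity
      _ = (1 + α * L) ^ (N + 1) := by ring

lemma hessProd_diff {d : ℕ} {α L ρ : ℝ} (hα : 0 < α) (hL : 0 < L) (hρ : 0 < ρ)
    {l : EuclideanSpace ℝ (Fin d) → ℝ}
    (hgrad : ∀ w u : EuclideanSpace ℝ (Fin d), ‖gradient l w - gradient l u‖ ≤ L * ‖w - u‖)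
    (hhess : ∀ w u : EuclideanSpace ℝ (Fin d),
      ‖fderiv ℝ (gradient l) w - fderiv ℝ (gradient l) u‖ ≤ ρ * ‖w - u‖) :
    ∀ (N : ℕ) (w u : EuclideanSpace ℝ (Fin d)),
    ‖hessProd α N l w - hessProd α N l u‖ ≤ cBound α L ρ N * ‖w - u‖ := by
  intro N
  induction N with
  | zero =>
    intro w u
    have h0 : ∀ v : EuclideanSpace ℝ (Fin d), hessProd α 0 l v = 1 := fun _ => rfl
    rw [h0 w, h0 u, sub_self]
    show ‖(0 : EuclideanSpace ℝ (Fin d) →L[ℝ] EuclideanSpace ℝ (Fin d))‖ ≤ cBound α L ρ 0 * ‖w - u‖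
    rw [norm_zero]
    show (0:ℝ) ≤ (0:ℝ) * ‖w - u‖
    simp
  | succ N ih =>
    intro w u
    have hrw : hessProd α (N+1) l w - hessProd α (N+1) l u
        = (hessProd α N l w - hessProd α N l u) *
            (ContinuousLinearMap.id ℝ (EuclideanSpace ℝ (Fin d)) -
              α • fderiv ℝ (gradient l) (innerPath α l N w)) +
          hessProd α N l u *
            ((ContinuousLinearMap.id ℝ (EuclideanSpace ℝ (Fin d)) -
              α • fderiv ℝ (gradient l) (innerPath α l N w)) -
             (ContinuousLinearMap.id ℝ (EuclideanSpace ℝ (Fin d)) -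
              α • fderiv ℝ (gradient l) (innerPath α l N u))) := by
      have key : ∀ P Q A B : EuclideanSpace ℝ (Fin d) →L[ℝ] EuclideanSpace ℝ (Fin d),
          P * A - Q * B = (P - Q) * A + Q * (A - B) := fun P Q A B => by
        rw [sub_mul, mul_sub]; abel
      rw [hessProd_succ α l N w, hessProd_succ α l N u]
      exact key _ _ _ _
    set Pw := hessProd α N l w with hPw
    set Pu := hessProd α N l u with hPu
    set Aw := ContinuousLinearMap.id ℝ (EuclideanSpace ℝ (Fin d)) -
      α • fderiv ℝ (gradient l) (innerPath α l N w) with hAw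
    set Au := ContinuousLinearMap.id ℝ (EuclideanSpace ℝ (Fin d)) -
      α • fderiv ℝ (gradient l) (innerPath α l N u) with hAu
    have hAdiff : ‖Aw - Au‖ ≤ α * ρ * ((1 + α * L) ^ N * ‖w - u‖) := by
      have heq : Aw - Au = α • (fderiv ℝ (gradient l) (innerPath α l N u)
          - fderiv ℝ (gradient l) (innerPath α l N w)) := by
        rw [hAw, hAu, smul_sub]; abel
      rw [heq]
      refine (ContinuousLinearMap.opNorm_smul_le α _).trans ?_
      rw [Real.norm_eq_abs, abs_of_pos hα, mul_assoc]
      refine mul_le_mul_of_nonneg_left ?_ hα.le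
      refine (hhess _ _).trans ?_
      refine mul_le_mul_of_nonneg_left ?_ hρ.le
      rw [norm_sub_rev]
      exact pathLip hα hL hgrad N w u
    have h1 : ‖(Pw - Pu) * Aw‖ ≤ (cBound α L ρ N * ‖w - u‖) * (1 + α * L) := by
      refine (norm_mul_le _ _).trans ?_
      exact mul_le_mul (ih w u) (factorBound hα hL hgrad _) (norm_nonneg _)
        ((norm_nonneg _).trans (ih w u))
    have h2 : ‖Pu * (Aw - Au)‖ ≤ (1 + α * L) ^ N * (α * ρ * ((1 + α * L) ^ N * ‖w - u‖)) := by
      refine (norm_mul_le _ _).trans ?_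
      refine mul_le_mul (hessProd_norm hα hL hgrad N u) hAdiff (norm_nonneg _) ?_
      positivity
    calc ‖hessProd α (N+1) l w - hessProd α (N+1) l u‖
        ≤ ‖(Pw - Pu) * Aw‖ + ‖Pu * (Aw - Au)‖ := by rw [hrw]; exact norm_add_le _ _
      _ ≤ (cBound α L ρ N * ‖w - u‖) * (1 + α * L)
          + (1 + α * L) ^ N * (α * ρ * ((1 + α * L) ^ N * ‖w - u‖)) := add_le_add h1 h2
      _ = cBound α L ρ (N + 1) * ‖w - u‖ := by
          show _ = (cBound α L ρ N * (1 + α * L) + α * ρ * (1 + α * L) ^ (2 * N)) * ‖w - u‖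
          rw [two_mul, pow_add]; ring

lemma cBound_closed (α L ρ : ℝ) (hL : L ≠ 0) : ∀ M : ℕ,
    cBound α L ρ (M + 1) = (ρ / L) * (1 + α * L) ^ M * ((1 + α * L) ^ (M + 1) - 1) := by
  intro M
  induction M with
  | zero =>
    show cBound α L ρ 0 * (1 + α * L) + α * ρ * (1 + α * L) ^ (2 * 0) = _
    show (0:ℝ) * (1 + α * L) + α * ρ * (1 + α * L) ^ (2 * 0) = _
    field_simp
    ring
  | succ M ih =>
    show cBound α L ρ (M + 1) * (1 + α * L) + α * ρ * (1 + α * L) ^ (2 * (M + 1)) = _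
    rw [ih]
    field_simp
    ring

theorem stmt5 {d : ℕ} (hd : 1 ≤ d) (α L ρ : ℝ) (hα : 0 < α) (hL : 0 < L) (hρ : 0 < ρ)
    (N : ℕ) (hN : 1 ≤ N)
    (l : EuclideanSpace ℝ (Fin d) → ℝ) (hl : ContDiff ℝ 2 l)
    (hgrad : ∀ w u : EuclideanSpace ℝ (Fin d), ‖gradient l w - gradient l u‖ ≤ L * ‖w - u‖)
    (hhess : ∀ w u : EuclideanSpace ℝ (Fin d),
      ‖fderiv ℝ (gradient l) w - fderiv ℝ (gradient l) u‖ ≤ ρ * ‖w - u‖) :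
    ∀ w u : EuclideanSpace ℝ (Fin d),
      ‖metaGrad α N l l w - metaGrad α N l l u‖ ≤
        ((((1 + α * L) ^ (N - 1) * α * ρ +
            (ρ / L) * (1 + α * L) ^ N * ((1 + α * L) ^ (N - 1) - 1)) * (1 + α * L) ^ N) *
            ‖gradient l w‖ +
          (1 + α * L) ^ (2 * N) * L) * ‖w - u‖ := by
  intro w u
  set gw := gradient l (innerPath α l N w) with hgw
  set gu := gradient l (innerPath α l N u) with hgu
  have hrw : metaGrad α N l l w - metaGrad α N l l u
      = (hessProd α N l w - hessProd α N l u) gw + (hessProd α N l u) (gw - gu) := by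
    rw [ContinuousLinearMap.sub_apply, map_sub]
    show hessProd α N l w gw - hessProd α N l u gu = _
    abel
  have h1 : ‖(hessProd α N l w - hessProd α N l u) gw‖
      ≤ (cBound α L ρ N * ‖w - u‖) * ((1 + α * L) ^ N * ‖gradient l w‖) := by
    refine (ContinuousLinearMap.le_opNorm _ _).trans ?_
    exact mul_le_mul (hessProd_diff hα hL hρ hgrad hhess N w u)
      (gradGrowth hα hL hgrad N w) (norm_nonneg _)
      ((norm_nonneg _).trans (hessProd_diff hα hL hρ hgrad hhess N w u))
  have h2 : ‖(hessProd α N l u) (gw - gu)‖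
      ≤ (1 + α * L) ^ N * (L * ((1 + α * L) ^ N * ‖w - u‖)) := by
    refine (ContinuousLinearMap.le_opNorm _ _).trans ?_
    refine mul_le_mul (hessProd_norm hα hL hgrad N u) ?_ (norm_nonneg _) (by positivity)
    refine (hgrad _ _).trans ?_
    exact mul_le_mul_of_nonneg_left (pathLip hα hL hgrad N w u) hL.le
  obtain ⟨M, rfl⟩ : ∃ M, N = M + 1 := ⟨N - 1, (Nat.succ_pred_eq_of_pos hN).symm⟩
  have hc : cBound α L ρ (M + 1)
      = (1 + α * L) ^ M * α * ρ + (ρ / L) * (1 + α * L) ^ (M + 1) * ((1 + α * L) ^ M - 1) := by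
    rw [cBound_closed α L ρ hL.ne' M]
    field_simp
    ring
  have hNsub : (M + 1) - 1 = M := rfl
  calc ‖metaGrad α (M+1) l l w - metaGrad α (M+1) l l u‖
      ≤ (cBound α L ρ (M+1) * ‖w - u‖) * ((1 + α * L) ^ (M+1) * ‖gradient l w‖)
        + (1 + α * L) ^ (M+1) * (L * ((1 + α * L) ^ (M+1) * ‖w - u‖)) := by
        rw [hrw]; exact (norm_add_le _ _).trans (add_le_add h1 h2)
    _ = ((cBound α L ρ (M+1) * (1 + α * L) ^ (M+1)) * ‖gradient l w‖
        + (1 + α * L) ^ (2 * (M+1)) * L) * ‖w - u‖ := by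
        rw [two_mul, pow_add]; ring
    _ = _ := by rw [hc, hNsub]
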